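/- For every irrational x ∈ (0,1) and every n ≥ 1, x = h_{(a₁,ε₁)_{s₁}} ∘ h_{(a₂,ε₂)_{s₂}} ∘ ⋯ ∘ h_{(a_n,ε_n)_{s_n}}(Tⁿ(x)), where (a_i,ε_i)_{s_i} are the SCF digits of x; moreover |x − P_n(x)/Q_n(x)| ≤ 4^{−n}, so the SCF convergents P_n(x)/Q_n(x) converge to x as n → ∞. -/

import Mathlib

open MeasureTheory Real Set Filter Topology

namespace SCF

/-- The involution `ι(x) = (1−x)/(1+x)`. -/
noncomputable def iota (x : ℝ) : ℝ := (1 - x) / (1 + x)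

/-- Even continued-fraction step.  For `y ∈ (0,1/2]` one has
`⌊(1/y+1)/2⌋ = k` whenever `1/y ∈ (2k−1, 2k+1)`, so `Te y = |1/y − 2k|`;
explicitly `Te y = 1/y − 2` on `[1/3,1/2]`, `Te y = 1/y − 2k` on
`[1/(2k+1), 1/(2k))` and `Te y = 2k − 1/y` on `[1/(2k), 1/(2k−1))` (`k ≥ 2`). -/
noncomputable def Te (y : ℝ) : ℝ := |1 / y - 2 * (⌊(1 / y + 1) / 2⌋ : ℝ)|

/-- The spliced continued fraction (SCF) map `T : [0,1] → [0,1]`, with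
`T 0 = 0`, `T 1 = 1`.  On `(0,1/2]` it is the even continued fraction map
(see `Te`), and on `(1/2,1)` it is the odd–odd map, which is the conjugate
`ι ∘ Te ∘ ι` of the even map; this agrees with the branchwise definition:
`T x = (k x − (k−1))/(k − (k+1) x)` on `((k−1)/k, (2k−1)/(2k+1)]` and
`T x = (k − (k+1) x)/(k x − (k−1))` on `((2k−1)/(2k+1), k/(k+1)]` for `k ≥ 2`. -/
noncomputable def T (x : ℝ) : ℝ :=
  if x ≤ 0 then 0
  else if 1 ≤ x then 1
  else if x ≤ 1 / 2 then Te x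
  else iota (Te (iota x))

/-- Parity label of a digit: `e` (even cusp) or `o` (odd–odd cusp). -/
inductive Par | e | o
deriving DecidableEq

/-- A candidate SCF digit `(a, ε)_s`. -/
structure Digit where
  a : ℤ
  eps : ℤ
  s : Par
deriving DecidableEq

/-- The digit set `𝒜 = {(k,ε)_s : k ≥ 2, ε = ±1, s ∈ {e,o}} ∪ {(1,+1)_e}`. -/
def Digit.Valid (d : Digit) : Prop :=
  (2 ≤ d.a ∧ (d.eps = 1 ∨ d.eps = -1)) ∨ (d.a = 1 ∧ d.eps = 1 ∧ d.s = Par.e)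

/-- The branch intervals `I_{(a,ε)_s}` of the SCF map. -/
noncomputable def branch (d : Digit) : Set ℝ :=
  match d.s with
  | Par.e =>
      if d.a = 1 then Set.Icc (1/3 : ℝ) (1/2)
      else if d.eps = 1 then Set.Ico (1 / (2 * (d.a : ℝ) + 1)) (1 / (2 * (d.a : ℝ)))
      else Set.Ico (1 / (2 * (d.a : ℝ))) (1 / (2 * (d.a : ℝ) - 1))
  | Par.o =>
      if d.eps = 1 then
        Set.Ioc ((2 * (d.a : ℝ) - 1) / (2 * (d.a : ℝ) + 1)) ((d.a : ℝ) / ((d.a : ℝ) + 1))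
      else
        Set.Ioc (((d.a : ℝ) - 1) / (d.a : ℝ)) ((2 * (d.a : ℝ) - 1) / (2 * (d.a : ℝ) + 1))

open Classical in
/-- The SCF digit of a point `y` (the unique valid digit `d` with `y ∈ I_d`;
well defined for every `y ∈ (0,1)`). -/
noncomputable def digit (y : ℝ) : Digit :=
  if h : ∃ d : Digit, d.Valid ∧ y ∈ branch d then h.choose else ⟨1, 1, Par.e⟩

/-- The `n`-th SCF digit `(a_n(x), ε_n(x))_{s_n(x)}` of `x`, `n ≥ 1`,
determined by `T^[n−1] x ∈ I_{(a_n,ε_n)_{s_n}}`. -/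
noncomputable def dig (n : ℕ) (x : ℝ) : Digit := digit (T^[n - 1] x)

/-- The `n`-th SCF partial quotient `a_n(x)`. -/
noncomputable def a (n : ℕ) (x : ℝ) : ℤ := (dig n x).a

/-- The invariant density `f_μ`. -/
noncomputable def fdens (x : ℝ) : ℝ :=
  2 / (Real.log (2 + Real.sqrt 3) * (1 - (2 - Real.sqrt 3) * x) * (1 + Real.sqrt 3 * x))

/-- The absolutely continuous `T`-invariant probability measure `μ` on `(0,1)`. -/
noncomputable def mu : Measure ℝ :=
  (volume.restrict (Set.Ioo (0 : ℝ) 1)).withDensity fun x => ENNReal.ofReal (fdens x)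

/-- The inverse branches `h_{(a,ε)_s}` of the SCF map `T`. -/
noncomputable def h (d : Digit) (x : ℝ) : ℝ :=
  match d.s with
  | Par.e => 1 / (2 * (d.a : ℝ) + (d.eps : ℝ) * x)
  | Par.o =>
      if d.eps = 1 then (((d.a : ℝ) - 1) * x + (d.a : ℝ)) / ((d.a : ℝ) * x + ((d.a : ℝ) + 1))
      else ((d.a : ℝ) * x + ((d.a : ℝ) - 1)) / (((d.a : ℝ) + 1) * x + (d.a : ℝ))

/-- Composed inverse branch `h_{A^{(n)}} = h_{A₁} ∘ ⋯ ∘ h_{A_n}` of a word. -/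
noncomputable def hWord (l : List Digit) : ℝ → ℝ :=
  l.foldr (fun d g => h d ∘ g) id

/-- The dual inverse branches `bar h_{(b,η)_t}`. -/
noncomputable def hbar (d : Digit) (y : ℝ) : ℝ :=
  match d.s with
  | Par.e => (d.eps : ℝ) / (2 * (d.a : ℝ) + y)
  | Par.o =>
      1 / (1 + (d.eps : ℝ) / (((d.a : ℝ) - ((max 0 d.eps : ℤ) : ℝ)) + 1 / (1 + y)))

/-- The matrix `M_{(a,ε)_s}` associated with the inverse branch `h_{(a,ε)_s}`. -/
noncomputable def Mdig (d : Digit) : Matrix (Fin 2) (Fin 2) ℝ :=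
  match d.s with
  | Par.e => !![0, 1; (d.eps : ℝ), 2 * (d.a : ℝ)]
  | Par.o =>
      !![(d.a : ℝ) - ((max 0 d.eps : ℤ) : ℝ), (d.a : ℝ) - ((max 0 d.eps : ℤ) : ℝ) + (d.eps : ℝ);
         (d.a : ℝ) - ((max 0 d.eps : ℤ) : ℝ) + 1, (d.a : ℝ) - ((max 0 d.eps : ℤ) : ℝ) + (d.eps : ℝ) + 1]

/-- `M_n(x) = M_{(a₁,ε₁)_{s₁}} ⋯ M_{(a_n,ε_n)_{s_n}}`. -/
noncomputable def Mn (n : ℕ) (x : ℝ) : Matrix (Fin 2) (Fin 2) ℝ :=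
  ((List.range n).map fun i => Mdig (digit (T^[i] x))).prod

/-- `P_n(x)`: the `(1,2)`-entry of `M_n(x)` (numerator of the `n`-th convergent). -/
noncomputable def Pc (n : ℕ) (x : ℝ) : ℝ := Mn n x 0 1

/-- `Q_n(x)`: the `(2,2)`-entry of `M_n(x)` (denominator of the `n`-th convergent). -/
noncomputable def Qc (n : ℕ) (x : ℝ) : ℝ := Mn n x 1 1

/-! ### Auxiliary lemmas -/

lemma irr_mob {w : ℝ} (hw : Irrational w) (a b c d : ℤ)
    (hdet : a * d - b * c ≠ 0) (hden : (c : ℝ) * w + d ≠ 0) :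
    Irrational (((a : ℝ) * w + b) / ((c : ℝ) * w + d)) := by
  rintro ⟨q, hq⟩
  rw [eq_comm, div_eq_iff hden] at hq
  by_cases hc : (a : ℝ) - (q : ℝ) * c = 0
  · apply hdet
    have hb : (b : ℝ) = (q : ℝ) * d := by linear_combination hq - w * hc
    have hz : ((a * d - b * c : ℤ) : ℝ) = 0 := by push_cast; linear_combination d * hc - c * hb
    exact_mod_cast hz
  · apply hw
    refine ⟨((q : ℚ) * d - b) / (a - q * c), ?_⟩
    have hc2 : ((a : ℝ) - (q : ℝ) * c) ≠ 0 := hc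
    push_cast
    rw [div_eq_iff hc2]
    linear_combination -hq

lemma irr_ne_div_int {y : ℝ} (hirr : Irrational y) (p q : ℤ) : y ≠ (p : ℝ) / (q : ℝ) := by
  intro hy
  exact hirr ⟨(p : ℚ) / q, by push_cast; exact hy.symm⟩

lemma Te_eq {z : ℝ} {k : ℤ} (h1 : 2 * (k : ℝ) - 1 ≤ 1 / z) (h2 : 1 / z < 2 * (k : ℝ) + 1) :
    Te z = |1 / z - 2 * (k : ℝ)| := by
  unfold Te
  have hfl : ⌊(1 / z + 1) / 2⌋ = k := by
    rw [Int.floor_eq_iff]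
    constructor
    · linarith
    · push_cast; linarith
  rw [hfl]

lemma T_even {z : ℝ} (h0 : 0 < z) (h2 : z ≤ 1 / 2) : T z = Te z := by
  unfold T
  rw [if_neg (by linarith), if_neg (by linarith), if_pos h2]

lemma step_e_pos {z : ℝ} {k : ℤ} (hk : 1 ≤ k) (hz : 0 < z)
    (h1 : 2 * (k : ℝ) < 1 / z) (h2 : 1 / z < 2 * (k : ℝ) + 1) :
    T z = 1 / z - 2 * k ∧ T z ∈ Set.Ioo (0 : ℝ) 1 := by
  have hk' : (1 : ℝ) ≤ (k : ℝ) := by exact_mod_cast hk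
  have h2z : (2 : ℝ) * z ≤ 1 := by
    have := (le_div_iff₀ hz).mp (by linarith : (2:ℝ) ≤ 1 / z)
    linarith
  have hT : T z = 1 / z - 2 * k := by
    rw [T_even hz (by linarith), Te_eq (by linarith) h2, abs_of_pos (by linarith)]
  exact ⟨hT, by rw [hT]; exact ⟨by linarith, by linarith⟩⟩

lemma step_e_neg {z : ℝ} {k : ℤ} (hk : 2 ≤ k) (hz : 0 < z)
    (h1 : 2 * (k : ℝ) - 1 < 1 / z) (h2 : 1 / z < 2 * (k : ℝ)) :
    T z = 2 * k - 1 / z ∧ T z ∈ Set.Ioo (0 : ℝ) 1 := by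
  have hk' : (2 : ℝ) ≤ (k : ℝ) := by exact_mod_cast hk
  have h2z : (2 : ℝ) * z ≤ 1 := by
    have := (le_div_iff₀ hz).mp (by linarith : (2:ℝ) ≤ 1 / z)
    linarith
  have hT : T z = 2 * k - 1 / z := by
    rw [T_even hz (by linarith), Te_eq (by linarith) (by linarith), abs_of_neg (by linarith)]
    ring
  exact ⟨hT, by rw [hT]; exact ⟨by linarith, by linarith⟩⟩
lemma branch_e (k ε : ℤ) : branch ⟨k, ε, Par.e⟩ =
    if k = 1 then Set.Icc (1/3 : ℝ) (1/2)
    else if ε = 1 then Set.Ico (1 / (2 * (k : ℝ) + 1)) (1 / (2 * (k : ℝ)))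
    else Set.Ico (1 / (2 * (k : ℝ))) (1 / (2 * (k : ℝ) - 1)) := rfl

lemma branch_o (k ε : ℤ) : branch ⟨k, ε, Par.o⟩ =
    if ε = 1 then
      Set.Ioc ((2 * (k : ℝ) - 1) / (2 * (k : ℝ) + 1)) ((k : ℝ) / ((k : ℝ) + 1))
    else Set.Ioc (((k : ℝ) - 1) / (k : ℝ)) ((2 * (k : ℝ) - 1) / (2 * (k : ℝ) + 1)) := rfl

lemma h_e (k ε : ℤ) (x : ℝ) : h ⟨k, ε, Par.e⟩ x = 1 / (2 * (k : ℝ) + (ε : ℝ) * x) := rfl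

lemma h_o (k ε : ℤ) (x : ℝ) : h ⟨k, ε, Par.o⟩ x =
    if ε = 1 then (((k : ℝ) - 1) * x + (k : ℝ)) / ((k : ℝ) * x + ((k : ℝ) + 1))
    else ((k : ℝ) * x + ((k : ℝ) - 1)) / (((k : ℝ) + 1) * x + (k : ℝ)) := rfl

lemma Te_val_pos {z : ℝ} {k : ℤ} (h1 : 2 * (k : ℝ) < 1 / z) (h2 : 1 / z < 2 * (k : ℝ) + 1) :
    Te z = 1 / z - 2 * (k : ℝ) := by
  rw [Te_eq (by linarith) h2, abs_of_pos (by linarith)]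

lemma Te_val_neg {z : ℝ} {k : ℤ} (h1 : 2 * (k : ℝ) - 1 < 1 / z) (h2 : 1 / z < 2 * (k : ℝ)) :
    Te z = 2 * (k : ℝ) - 1 / z := by
  rw [Te_eq (by linarith) (by linarith), abs_of_neg (by linarith)]
  ring

/-- The fundamental single-step identity. -/
lemma step {y : ℝ} (hy0 : 0 < y) (hy1 : y < 1) (hirr : Irrational y) {d : Digit}
    (hv : d.Valid) (hb : y ∈ branch d) :
    h d (T y) = y ∧ T y ∈ Set.Ioo (0 : ℝ) 1 ∧ Irrational (T y) := by
  obtain ⟨k, ε, s⟩ := d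
  simp only [Digit.Valid] at hv
  have hy0' : y ≠ 0 := hy0.ne'
  cases s with
  | e =>
    rw [branch_e] at hb
    -- reduce to: k ≥ 1, and strict 1/y bounds
    have key : ∀ K : ℤ, 1 ≤ K → ∀ E : ℤ, (E = 1 ∨ E = -1) →
        (E = 1 → 2 * (K : ℝ) < 1 / y ∧ 1 / y < 2 * (K : ℝ) + 1) →
        (E = -1 → 2 ≤ K ∧ 2 * (K : ℝ) - 1 < 1 / y ∧ 1 / y < 2 * (K : ℝ)) →
        h ⟨K, E, Par.e⟩ (T y) = y ∧ T y ∈ Set.Ioo (0 : ℝ) 1 ∧ Irrational (T y) := by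
      intro K hK E hE hp hn
      rcases hE with hE | hE
      · obtain ⟨h1, h2⟩ := hp hE
        obtain ⟨hT, hIoo⟩ := step_e_pos hK hy0 h1 h2
        subst hE
        refine ⟨?_, hIoo, ?_⟩
        · rw [h_e, hT]
          have hr : 2 * (K : ℝ) + ((1 : ℤ) : ℝ) * (1 / y - 2 * K) = 1 / y := by
            push_cast; ring
          rw [hr, one_div_one_div]
        · have hform : 1 / y - 2 * (K : ℝ) =
              (((-2 * K : ℤ) : ℝ) * y + ((1 : ℤ) : ℝ)) / (((1 : ℤ) : ℝ) * y + ((0 : ℤ) : ℝ)) := by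
            push_cast
            field_simp
            ring
          rw [hT, hform]
          exact irr_mob hirr _ _ _ _ (by norm_num) (by push_cast; simpa using hy0')
      · obtain ⟨hK2, h1, h2⟩ := hn hE
        obtain ⟨hT, hIoo⟩ := step_e_neg hK2 hy0 h1 h2
        subst hE
        refine ⟨?_, hIoo, ?_⟩
        · rw [h_e, hT]
          have hr : 2 * (K : ℝ) + ((-1 : ℤ) : ℝ) * (2 * K - 1 / y) = 1 / y := by
            push_cast; ring
          rw [hr, one_div_one_div]
        · have hform : 2 * (K : ℝ) - 1 / y =
              (((2 * K : ℤ) : ℝ) * y + ((-1 : ℤ) : ℝ)) / (((1 : ℤ) : ℝ) * y + ((0 : ℤ) : ℝ)) := by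
            push_cast
            field_simp
            ring
          rw [hT, hform]
          refine irr_mob hirr _ _ _ _ (by norm_num) (by push_cast; simpa using hy0')
    rcases hv with ⟨hk2, hε⟩ | ⟨hk1, hε1, -⟩
    · rw [if_neg (by omega : ¬ k = 1)] at hb
      have hK : (2 : ℝ) ≤ (k : ℝ) := by exact_mod_cast hk2
      rcases hε with hε | hε
      · rw [if_pos hε] at hb
        obtain ⟨hlow, hup⟩ := hb
        have hlow' : 1 / (2 * (k : ℝ) + 1) < y := by
          refine lt_of_le_of_ne hlow ?_
          have := irr_ne_div_int hirr 1 (2 * k + 1)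
          intro hcontra
          apply this
          rw [← hcontra]; push_cast; ring
        have h1 : 2 * (k : ℝ) < 1 / y := by
          rw [lt_div_iff₀ hy0]
          have := (lt_div_iff₀ (by linarith : (0:ℝ) < 2 * (k:ℝ))).mp hup
          linarith
        have h2 : 1 / y < 2 * (k : ℝ) + 1 := by
          rw [div_lt_iff₀ hy0]
          have := (div_lt_iff₀ (by linarith : (0:ℝ) < 2 * (k:ℝ) + 1)).mp hlow'
          linarith
        exact key k (by omega) ε (Or.inl hε) (fun _ => ⟨h1, h2⟩) (by intro hc; exfalso; omega)
      · rw [if_neg (by omega : ¬ ε = 1)] at hb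
        obtain ⟨hlow, hup⟩ := hb
        have hlow' : 1 / (2 * (k : ℝ)) < y := by
          refine lt_of_le_of_ne hlow ?_
          have := irr_ne_div_int hirr 1 (2 * k)
          intro hcontra
          apply this
          rw [← hcontra]; push_cast; ring
        have h1 : 2 * (k : ℝ) - 1 < 1 / y := by
          rw [lt_div_iff₀ hy0]
          have := (lt_div_iff₀ (by linarith : (0:ℝ) < 2 * (k:ℝ) - 1)).mp hup
          linarith
        have h2 : 1 / y < 2 * (k : ℝ) := by
          rw [div_lt_iff₀ hy0]
          have := (div_lt_iff₀ (by linarith : (0:ℝ) < 2 * (k:ℝ))).mp hlow'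
          linarith
        exact key k (by omega) ε (Or.inr hε) (by intro hc; exfalso; omega)
          (fun _ => ⟨hk2, h1, h2⟩)
    · subst hk1; subst hε1
      rw [if_pos rfl] at hb
      obtain ⟨hlow, hup⟩ := hb
      have hlow' : (1/3 : ℝ) < y := by
        refine lt_of_le_of_ne hlow ?_
        have := irr_ne_div_int hirr 1 3
        intro hcontra
        apply this
        rw [← hcontra]; norm_num
      have hup' : y < (1/2 : ℝ) := by
        refine lt_of_le_of_ne hup ?_
        have := irr_ne_div_int hirr 1 2
        intro hcontra
        apply this
        rw [hcontra]; norm_num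
      have h1 : (2 : ℝ) < 1 / y := by
        rw [lt_div_iff₀ hy0]; linarith
      have h2 : 1 / y < 3 := by
        rw [div_lt_iff₀ hy0]; linarith
      have := key 1 le_rfl 1 (Or.inl rfl)
        (fun _ => ⟨by push_cast; linarith, by push_cast; linarith⟩)
        (by intro hc; exfalso; omega)
      exact this
  | o =>
    rcases hv with ⟨hk2, hε⟩ | ⟨-, -, hco⟩
    swap
    · simp at hco
    rw [branch_o] at hb
    have hK : (2 : ℝ) ≤ (k : ℝ) := by exact_mod_cast hk2
    have hKpos : (0 : ℝ) < (k : ℝ) := by linarith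
    have h2K1 : (0 : ℝ) < 2 * (k : ℝ) + 1 := by linarith
    have hK1 : (0 : ℝ) < (k : ℝ) + 1 := by linarith
    have hAB : (k : ℝ) - 1 < (k : ℝ) * y ∧ ((k : ℝ) + 1) * y < (k : ℝ) ∧
        (ε = 1 → 2 * (k : ℝ) - 1 < (2 * (k : ℝ) + 1) * y) ∧
        (ε = -1 → (2 * (k : ℝ) + 1) * y < 2 * (k : ℝ) - 1) := by
      rcases hε with hε | hε
      · rw [if_pos hε] at hb
        obtain ⟨hlow, hup⟩ := hb
        have hup' : y < (k : ℝ) / ((k : ℝ) + 1) := by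
          refine lt_of_le_of_ne hup ?_
          have h0 := irr_ne_div_int hirr k (k + 1)
          intro hc; apply h0; rw [hc]; push_cast; ring
        have hA : 2 * (k : ℝ) - 1 < (2 * (k : ℝ) + 1) * y := by
          have := (div_lt_iff₀ h2K1).mp hlow
          linarith
        have hB : ((k : ℝ) + 1) * y < (k : ℝ) := by
          have := (lt_div_iff₀ hK1).mp hup'
          linarith
        exact ⟨by nlinarith, hB, fun _ => hA,
          fun hc => by rw [hc] at hε; norm_num at hε⟩
      · rw [if_neg (by omega : ¬ ε = 1)] at hb
        obtain ⟨hlow, hup⟩ := hb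
        have hup' : y < (2 * (k : ℝ) - 1) / (2 * (k : ℝ) + 1) := by
          refine lt_of_le_of_ne hup ?_
          have h0 := irr_ne_div_int hirr (2 * k - 1) (2 * k + 1)
          intro hc; apply h0; rw [hc]; push_cast; ring
        have hA0 : (k : ℝ) - 1 < (k : ℝ) * y := by
          have := (div_lt_iff₀ hKpos).mp hlow
          linarith
        have hB0 : (2 * (k : ℝ) + 1) * y < 2 * (k : ℝ) - 1 := by
          have := (lt_div_iff₀ h2K1).mp hup'
          linarith
        exact ⟨hA0, by nlinarith, fun hc => by rw [hc] at hε; norm_num at hε,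
          fun _ => hB0⟩
    obtain ⟨hD0, hN0, hE1, hE2⟩ := hAB
    have h1y : (0 : ℝ) < 1 - y := by linarith
    have hD : (0 : ℝ) < (k : ℝ) * y - ((k : ℝ) - 1) := by linarith
    have hN : (0 : ℝ) < (k : ℝ) - ((k : ℝ) + 1) * y := by linarith
    have hyhalf : (1 : ℝ) / 2 < y := by nlinarith
    have hTy0 : T y = iota (Te (iota y)) := by
      unfold T
      rw [if_neg (by linarith), if_neg (by linarith), if_neg (by linarith)]
    have hinv : 1 / iota y = (1 + y) / (1 - y) := by
      unfold iota; rw [one_div_div]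
    rcases hε with hε | hε
    · subst hε
      have hA := hE1 rfl
      have hz1' : 2 * (k : ℝ) < (1 + y) / (1 - y) := by
        rw [lt_div_iff₀ h1y]; nlinarith
      have hz2' : (1 + y) / (1 - y) < 2 * (k : ℝ) + 1 := by
        rw [div_lt_iff₀ h1y]; nlinarith
      have hTe : Te (iota y) = (1 + y) / (1 - y) - 2 * (k : ℝ) := by
        rw [Te_val_pos (k := k) (by rw [hinv]; exact hz1') (by rw [hinv]; exact hz2'), hinv]
      have hW : (0 : ℝ) < 1 + ((1 + y) / (1 - y) - 2 * (k : ℝ)) := by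
        have : (2 * (k : ℝ) - 1) < (1 + y) / (1 - y) := by
          rw [lt_div_iff₀ h1y]; nlinarith
        linarith
      have hTy : T y = ((k : ℝ) - ((k : ℝ) + 1) * y) / ((k : ℝ) * y - ((k : ℝ) - 1)) := by
        rw [hTy0, hTe]
        unfold iota
        rw [div_eq_div_iff hW.ne' hD.ne']
        field_simp
        ring
      refine ⟨?_, ?_, ?_⟩
      · rw [h_o, if_pos rfl, hTy]
        have hd2 : (k : ℝ) * (((k : ℝ) - ((k : ℝ) + 1) * y) / ((k : ℝ) * y - ((k : ℝ) - 1)))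
            + ((k : ℝ) + 1) = 1 / ((k : ℝ) * y - ((k : ℝ) - 1)) := by
          rw [eq_div_iff hD.ne']; field_simp; ring
        have hn2 : ((k : ℝ) - 1) * (((k : ℝ) - ((k : ℝ) + 1) * y) / ((k : ℝ) * y - ((k : ℝ) - 1)))
            + (k : ℝ) = y / ((k : ℝ) * y - ((k : ℝ) - 1)) := by
          rw [eq_div_iff hD.ne']; field_simp; ring
        rw [hn2, hd2]
        field_simp
        exact div_self (ne_of_gt (by linarith))
      · rw [hTy, Set.mem_Ioo]
        exact ⟨div_pos hN hD, by rw [div_lt_one hD]; linarith⟩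
      · have hform : ((k : ℝ) - ((k : ℝ) + 1) * y) / ((k : ℝ) * y - ((k : ℝ) - 1)) =
            (((-(k + 1) : ℤ) : ℝ) * y + ((k : ℤ) : ℝ)) /
              (((k : ℤ) : ℝ) * y + ((-(k - 1) : ℤ) : ℝ)) := by
          push_cast; ring_nf
        rw [hTy, hform]
        refine irr_mob hirr _ _ _ _ (by intro hc; ring_nf at hc; omega) ?_
        push_cast
        intro hc; apply hD.ne'
        linarith
    · subst hε
      have hB0 := hE2 rfl
      have hz2' : (1 + y) / (1 - y) < 2 * (k : ℝ) := by
        rw [div_lt_iff₀ h1y]; nlinarith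
      have hz1' : 2 * (k : ℝ) - 1 < (1 + y) / (1 - y) := by
        rw [lt_div_iff₀ h1y]; nlinarith
      have hTe : Te (iota y) = 2 * (k : ℝ) - (1 + y) / (1 - y) := by
        rw [Te_val_neg (k := k) (by rw [hinv]; exact hz1') (by rw [hinv]; exact hz2'), hinv]
      have hW : (0 : ℝ) < 1 + (2 * (k : ℝ) - (1 + y) / (1 - y)) := by
        have : (1 + y) / (1 - y) < 2 * (k : ℝ) + 1 := by
          rw [div_lt_iff₀ h1y]; nlinarith
        linarith
      have hTy : T y = ((k : ℝ) * y - ((k : ℝ) - 1)) / ((k : ℝ) - ((k : ℝ) + 1) * y) := by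
        rw [hTy0, hTe]
        unfold iota
        rw [div_eq_div_iff hW.ne' hN.ne']
        field_simp
        ring
      refine ⟨?_, ?_, ?_⟩
      · rw [h_o, if_neg (by norm_num), hTy]
        have hd2 : ((k : ℝ) + 1) * (((k : ℝ) * y - ((k : ℝ) - 1)) / ((k : ℝ) - ((k : ℝ) + 1) * y))
            + (k : ℝ) = 1 / ((k : ℝ) - ((k : ℝ) + 1) * y) := by
          rw [eq_div_iff hN.ne']; field_simp; ring
        have hn2 : (k : ℝ) * (((k : ℝ) * y - ((k : ℝ) - 1)) / ((k : ℝ) - ((k : ℝ) + 1) * y))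
            + ((k : ℝ) - 1) = y / ((k : ℝ) - ((k : ℝ) + 1) * y) := by
          rw [mul_div_assoc', div_add' _ _ _ hN.ne']; congr 1; ring
        rw [hn2, hd2]
        field_simp
        exact div_self (ne_of_gt (by linarith))
      · rw [hTy, Set.mem_Ioo]
        exact ⟨div_pos hD hN, by rw [div_lt_one hN]; linarith⟩
      · have hform : ((k : ℝ) * y - ((k : ℝ) - 1)) / ((k : ℝ) - ((k : ℝ) + 1) * y) =
            (((k : ℤ) : ℝ) * y + ((-(k - 1) : ℤ) : ℝ)) /
              (((-(k + 1) : ℤ) : ℝ) * y + ((k : ℤ) : ℝ)) := by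
          push_cast; ring_nf
        rw [hTy, hform]
        refine irr_mob hirr _ _ _ _ (by intro hc; ring_nf at hc; omega) ?_
        push_cast
        intro hc; apply hN.ne'
        linarith
lemma exists_digit {y : ℝ} (hy0 : 0 < y) (hy1 : y < 1) (hirr : Irrational y) :
    ∃ d : Digit, d.Valid ∧ y ∈ branch d := by
  by_cases hhalf : y ≤ 1/2
  · -- even regime
    have hu2 : (2 : ℝ) ≤ 1 / y := by
      rw [le_div_iff₀ hy0]; linarith
    have huirr : Irrational (1 / y) := by
      have hform : 1 / y = (((0 : ℤ) : ℝ) * y + ((1 : ℤ) : ℝ)) /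
          (((1 : ℤ) : ℝ) * y + ((0 : ℤ) : ℝ)) := by push_cast; ring_nf
      rw [hform]
      exact irr_mob hirr _ _ _ _ (by norm_num) (by push_cast; simpa using hy0.ne')
    obtain ⟨k, hk1, hkl, hku⟩ : ∃ k : ℤ, 1 ≤ k ∧ 2 * (k : ℝ) - 1 < (1 / y) ∧ (1 / y) < 2 * (k : ℝ) + 1 := by
      refine ⟨⌊((1 / y) + 1) / 2⌋, ?_, ?_, ?_⟩
      · rw [Int.le_floor]; push_cast; linarith
      · have h1 := Int.floor_le (((1 / y) + 1) / 2)
        have hne : (1 / y) ≠ ((2 * ⌊((1 / y) + 1) / 2⌋ - 1 : ℤ) : ℝ) := huirr.ne_int _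
        push_cast at hne ⊢
        rcases lt_or_eq_of_le (by linarith : 2 * ((⌊((1 / y) + 1) / 2⌋ : ℤ) : ℝ) - 1 ≤ (1 / y)) with h | h
        · exact h
        · exact absurd h.symm (by push_cast; exact hne)
      · have h2 := Int.lt_floor_add_one (((1 / y) + 1) / 2)
        push_cast at h2 ⊢
        linarith
    have hkne : (1 / y) ≠ ((2 * k : ℤ) : ℝ) := huirr.ne_int _
    push_cast at hkne
    by_cases hlt : (1 / y) < 2 * (k : ℝ)
    · -- ε = -1, k ≥ 2
      have hk2 : 2 ≤ k := by
        have h1k : (1 : ℝ) < (k : ℝ) := by linarith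
        have h1k' : (1 : ℤ) < k := by exact_mod_cast h1k
        omega
      have hK : (2 : ℝ) ≤ (k : ℝ) := by exact_mod_cast hk2
      refine ⟨⟨k, -1, Par.e⟩, Or.inl ⟨hk2, Or.inr rfl⟩, ?_⟩
      rw [branch_e, if_neg (by omega), if_neg (by norm_num)]
      constructor
      · rw [div_le_iff₀ (by linarith : (0:ℝ) < 2 * (k:ℝ))]
        have := (div_lt_iff₀ hy0).mp hlt
        linarith
      · rw [lt_div_iff₀ (by linarith : (0:ℝ) < 2 * (k:ℝ) - 1)]
        have := (lt_div_iff₀ hy0).mp hkl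
        linarith
    · have hgt : 2 * (k : ℝ) < (1 / y) := lt_of_le_of_ne (not_lt.mp hlt) (Ne.symm hkne)
      by_cases hk1' : k = 1
      · subst hk1'
        refine ⟨⟨1, 1, Par.e⟩, Or.inr ⟨rfl, rfl, rfl⟩, ?_⟩
        rw [branch_e, if_pos rfl]
        constructor
        · have := (div_lt_iff₀ hy0).mp hku
          push_cast at this ⊢
          linarith
        · exact hhalf
      · have hk2 : 2 ≤ k := by omega
        refine ⟨⟨k, 1, Par.e⟩, Or.inl ⟨hk2, Or.inl rfl⟩, ?_⟩
        rw [branch_e, if_neg (by omega), if_pos rfl]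
        constructor
        · rw [div_le_iff₀ (by push_cast; linarith : (0:ℝ) < 2 * (k:ℝ) + 1)]
          have := (div_lt_iff₀ hy0).mp hku
          linarith
        · rw [lt_div_iff₀ (by push_cast; linarith : (0:ℝ) < 2 * (k:ℝ))]
          have := (lt_div_iff₀ hy0).mp hgt
          linarith
  · -- odd regime
    push_neg at hhalf
    have h1y : (0 : ℝ) < 1 - y := by linarith
    have huirr : Irrational ((1 + y) / (1 - y)) := by
      have hform : (1 + y) / (1 - y) = (((1 : ℤ) : ℝ) * y + ((1 : ℤ) : ℝ)) /
          ((((-1) : ℤ) : ℝ) * y + ((1 : ℤ) : ℝ)) := by push_cast; ring_nf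
      rw [hform]
      refine irr_mob hirr _ _ _ _ (by norm_num) ?_
      push_cast
      intro hc; nlinarith
    have hu3 : (3 : ℝ) < (1 + y) / (1 - y) := by
      rw [lt_div_iff₀ h1y]; linarith
    obtain ⟨k, hk2, hkl, hku⟩ : ∃ k : ℤ, 2 ≤ k ∧ 2 * (k : ℝ) - 1 < ((1 + y) / (1 - y)) ∧ ((1 + y) / (1 - y)) < 2 * (k : ℝ) + 1 := by
      refine ⟨⌊(((1 + y) / (1 - y)) + 1) / 2⌋, ?_, ?_, ?_⟩
      · rw [Int.le_floor]; push_cast; linarith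
      · have h1 := Int.floor_le ((((1 + y) / (1 - y)) + 1) / 2)
        have hne : ((1 + y) / (1 - y)) ≠ ((2 * ⌊(((1 + y) / (1 - y)) + 1) / 2⌋ - 1 : ℤ) : ℝ) := huirr.ne_int _
        push_cast at hne ⊢
        rcases lt_or_eq_of_le (by linarith : 2 * ((⌊(((1 + y) / (1 - y)) + 1) / 2⌋ : ℤ) : ℝ) - 1 ≤ ((1 + y) / (1 - y))) with h | h
        · exact h
        · exact absurd h.symm (by push_cast; exact hne)
      · have h2 := Int.lt_floor_add_one ((((1 + y) / (1 - y)) + 1) / 2)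
        push_cast at h2 ⊢
        linarith
    have hK : (2 : ℝ) ≤ (k : ℝ) := by exact_mod_cast hk2
    have hkne : ((1 + y) / (1 - y)) ≠ ((2 * k : ℤ) : ℝ) := huirr.ne_int _
    push_cast at hkne
    have hA : 2 * (k : ℝ) * y - (2 * (k : ℝ) - 2) > 0 := by
      have := (lt_div_iff₀ h1y).mp hkl
      nlinarith
    have hB : (2 * (k : ℝ) + 2) * y < 2 * (k : ℝ) := by
      have := (div_lt_iff₀ h1y).mp hku
      nlinarith
    by_cases hlt : ((1 + y) / (1 - y)) < 2 * (k : ℝ)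
    · -- ε = -1
      have hB0 : (2 * (k : ℝ) + 1) * y < 2 * (k : ℝ) - 1 := by
        have := (div_lt_iff₀ h1y).mp hlt
        nlinarith
      refine ⟨⟨k, -1, Par.o⟩, Or.inl ⟨hk2, Or.inr rfl⟩, ?_⟩
      rw [branch_o, if_neg (by norm_num)]
      constructor
      · rw [div_lt_iff₀ (by linarith : (0:ℝ) < (k:ℝ))]
        nlinarith
      · rw [le_div_iff₀ (by linarith : (0:ℝ) < 2 * (k:ℝ) + 1)]
        nlinarith
    · have hgt : 2 * (k : ℝ) < ((1 + y) / (1 - y)) := lt_of_le_of_ne (not_lt.mp hlt) (Ne.symm hkne)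
      have hA0 : 2 * (k : ℝ) - 1 < (2 * (k : ℝ) + 1) * y := by
        have := (lt_div_iff₀ h1y).mp hgt
        nlinarith
      refine ⟨⟨k, 1, Par.o⟩, Or.inl ⟨hk2, Or.inl rfl⟩, ?_⟩
      rw [branch_o, if_pos rfl]
      constructor
      · rw [div_lt_iff₀ (by linarith : (0:ℝ) < 2 * (k:ℝ) + 1)]
        nlinarith
      · rw [le_div_iff₀ (by linarith : (0:ℝ) < (k:ℝ) + 1)]
        nlinarith

lemma digit_spec {y : ℝ} (hy : y ∈ Set.Ioo (0:ℝ) 1) (hirr : Irrational y) :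
    (digit y).Valid ∧ y ∈ branch (digit y) := by
  have hex := exists_digit hy.1 hy.2 hirr
  rw [digit, dif_pos hex]
  exact hex.choose_spec

lemma T_step {y : ℝ} (hy : y ∈ Set.Ioo (0:ℝ) 1) (hirr : Irrational y) :
    h (digit y) (T y) = y ∧ T y ∈ Set.Ioo (0:ℝ) 1 ∧ Irrational (T y) := by
  obtain ⟨hv, hb⟩ := digit_spec hy hirr
  exact step hy.1 hy.2 hirr hv hb

lemma orbit {x : ℝ} (hx : x ∈ Set.Ioo (0:ℝ) 1) (hirr : Irrational x) :
    ∀ n : ℕ, T^[n] x ∈ Set.Ioo (0:ℝ) 1 ∧ Irrational (T^[n] x) := by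
  intro n
  induction n with
  | zero => exact ⟨hx, hirr⟩
  | succ n ih =>
    rw [Function.iterate_succ_apply']
    exact (T_step ih.1 ih.2).2

lemma hWord_foldr (l : List Digit) (g : ℝ → ℝ) :
    l.foldr (fun d g => h d ∘ g) g = hWord l ∘ g := by
  induction l with
  | nil => rfl
  | cons d l ih => simp [hWord, List.foldr_cons, ih]; rfl

lemma hWord_cons (d : Digit) (l : List Digit) (t : ℝ) :
    hWord (d :: l) t = h d (hWord l t) := rfl

lemma hWord_append_singleton (l : List Digit) (d : Digit) (t : ℝ) :
    hWord (l ++ [d]) t = hWord l (h d t) := by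
  unfold hWord
  rw [List.foldr_append, hWord_foldr]
  rfl

lemma expansion {x : ℝ} (hx : x ∈ Set.Ioo (0:ℝ) 1) (hirr : Irrational x) :
    ∀ n : ℕ, x = hWord ((List.range n).map fun i => digit (T^[i] x)) (T^[n] x) := by
  intro n
  induction n with
  | zero => simp [hWord]
  | succ n ih =>
    rw [List.range_succ, List.map_append]
    simp only [List.map_cons, List.map_nil]
    rw [hWord_append_singleton]
    have horb := orbit hx hirr n
    have hstep := (T_step horb.1 horb.2).1
    rw [Function.iterate_succ_apply', hstep]
    exact ih
/-- Möbius action of a 2×2 matrix. -/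
noncomputable def mob (M : Matrix (Fin 2) (Fin 2) ℝ) (t : ℝ) : ℝ :=
  (M 0 0 * t + M 0 1) / (M 1 0 * t + M 1 1)

lemma mul_lin (A B : Matrix (Fin 2) (Fin 2) ℝ) (i : Fin 2) (t : ℝ) :
    (A * B) i 0 * t + (A * B) i 1 =
      A i 0 * (B 0 0 * t + B 0 1) + A i 1 * (B 1 0 * t + B 1 1) := by
  simp [Matrix.mul_apply, Fin.sum_univ_two]; ring

lemma Mdig_e (k ε : ℤ) : Mdig ⟨k, ε, Par.e⟩ = !![0, 1; (ε : ℝ), 2 * (k : ℝ)] := rfl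

lemma Mdig_o (k ε : ℤ) : Mdig ⟨k, ε, Par.o⟩ =
    !![(k : ℝ) - ((max 0 ε : ℤ) : ℝ), (k : ℝ) - ((max 0 ε : ℤ) : ℝ) + (ε : ℝ);
       (k : ℝ) - ((max 0 ε : ℤ) : ℝ) + 1, (k : ℝ) - ((max 0 ε : ℤ) : ℝ) + (ε : ℝ) + 1] := rfl

lemma lip_aux {t s Dt Ds u v : ℝ} (c : ℝ) (h2t : 2 ≤ Dt) (h2s : 2 ≤ Ds) (hc : |c| = 1)
    (huv : u - v = c * (t - s) / (Dt * Ds)) : |u - v| ≤ 1 / 4 * |t - s| := by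
  rw [huv, abs_div, abs_mul, hc, one_mul,
    abs_of_pos (by nlinarith : (0 : ℝ) < Dt * Ds),
    div_le_iff₀ (by nlinarith : (0 : ℝ) < Dt * Ds)]
  nlinarith [abs_nonneg (t - s), mul_nonneg (abs_nonneg (t - s))
    (by nlinarith : (0 : ℝ) ≤ Dt * Ds - 4)]

lemma digit_facts {d : Digit} (hv : d.Valid) :
    ∀ t ∈ Set.Icc (0:ℝ) 1,
      (2 ≤ Mdig d 1 0 * t + Mdig d 1 1) ∧
      mob (Mdig d) t = h d t ∧
      h d t ∈ Set.Icc (0:ℝ) 1 ∧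
      ∀ s ∈ Set.Icc (0:ℝ) 1, |h d t - h d s| ≤ 1 / 4 * |t - s| := by
  obtain ⟨k, ε, ss⟩ := d
  simp only [Digit.Valid] at hv
  intro t ht
  obtain ⟨ht0, ht1⟩ := ht
  cases ss with
  | e =>
    have hKE : (1 ≤ k ∧ ε = 1) ∨ (2 ≤ k ∧ ε = -1) := by
      rcases hv with ⟨hk2, hε | hε⟩ | ⟨hk1, hε1, -⟩
      · exact Or.inl ⟨by omega, hε⟩
      · exact Or.inr ⟨hk2, hε⟩
      · exact Or.inl ⟨by omega, hε1⟩
    have hM00 : Mdig ⟨k, ε, Par.e⟩ 0 0 = 0 := by rw [Mdig_e]; simp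
    have hM01 : Mdig ⟨k, ε, Par.e⟩ 0 1 = 1 := by rw [Mdig_e]; simp
    have hM10 : Mdig ⟨k, ε, Par.e⟩ 1 0 = (ε : ℝ) := by rw [Mdig_e]; simp
    have hM11 : Mdig ⟨k, ε, Par.e⟩ 1 1 = 2 * (k : ℝ) := by rw [Mdig_e]; simp
    have hden : ∀ r : ℝ, 0 ≤ r → r ≤ 1 → 2 ≤ 2 * (k : ℝ) + (ε : ℝ) * r := by
      intro r hr0 hr1
      rcases hKE with ⟨hk1, hε⟩ | ⟨hk2, hε⟩
      · have : (1 : ℝ) ≤ (k : ℝ) := by exact_mod_cast hk1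
        subst hε; push_cast; linarith
      · have : (2 : ℝ) ≤ (k : ℝ) := by exact_mod_cast hk2
        subst hε; push_cast; linarith
    have habs : |(-(ε : ℝ))| = 1 := by
      rcases hKE with ⟨-, hε⟩ | ⟨-, hε⟩ <;> subst hε <;> norm_num
    have hdt := hden t ht0 ht1
    refine ⟨?_, ?_, ?_, ?_⟩
    · rw [hM10, hM11]; linarith
    · unfold mob
      rw [hM00, hM01, hM10, hM11, h_e]
      rw [zero_mul, zero_add, add_comm ((ε:ℝ) * t)]
    · rw [h_e]
      constructor
      · positivity
      · rw [div_le_one (by linarith)]; linarith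
    · intro s hs
      have hds := hden s hs.1 hs.2
      rw [h_e, h_e]
      refine lip_aux (-(ε : ℝ)) hdt hds habs ?_
      have h1 : 2 * (k : ℝ) + (ε : ℝ) * t ≠ 0 := by linarith
      have h2 : 2 * (k : ℝ) + (ε : ℝ) * s ≠ 0 := by linarith
      field_simp
      all_goals ring_nf
  | o =>
    rcases hv with ⟨hk2, hε⟩ | ⟨-, -, hco⟩
    swap
    · simp at hco
    have hK : (2 : ℝ) ≤ (k : ℝ) := by exact_mod_cast hk2
    rcases hε with hε | hε
    · subst hε
      have hM00 : Mdig ⟨k, 1, Par.o⟩ 0 0 = (k : ℝ) - 1 := by rw [Mdig_o]; norm_num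
      have hM01 : Mdig ⟨k, 1, Par.o⟩ 0 1 = (k : ℝ) := by rw [Mdig_o]; norm_num
      have hM10 : Mdig ⟨k, 1, Par.o⟩ 1 0 = (k : ℝ) := by rw [Mdig_o]; norm_num
      have hM11 : Mdig ⟨k, 1, Par.o⟩ 1 1 = (k : ℝ) + 1 := by rw [Mdig_o]; norm_num
      have hdt : 2 ≤ (k : ℝ) * t + ((k : ℝ) + 1) := by nlinarith
      refine ⟨?_, ?_, ?_, ?_⟩
      · rw [hM10, hM11]; exact hdt
      · unfold mob
        rw [hM00, hM01, hM10, hM11, h_o, if_pos rfl]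
        all_goals norm_num
      · rw [h_o, if_pos rfl]
        constructor
        · apply div_nonneg (by nlinarith) (by nlinarith)
        · rw [div_le_one (by nlinarith)]; nlinarith
      · intro s hs
        have hds : 2 ≤ (k : ℝ) * s + ((k : ℝ) + 1) := by nlinarith [hs.1]
        rw [h_o, h_o, if_pos rfl]
        refine lip_aux (-1) hdt hds (by norm_num) ?_
        have h1 : (k : ℝ) * t + ((k : ℝ) + 1) ≠ 0 := by linarith
        have h2 : (k : ℝ) * s + ((k : ℝ) + 1) ≠ 0 := by linarith
        push_cast
        field_simp
        ring
    · subst hε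
      have hM00 : Mdig ⟨k, -1, Par.o⟩ 0 0 = (k : ℝ) := by rw [Mdig_o]; norm_num
      have hM01 : Mdig ⟨k, -1, Par.o⟩ 0 1 = (k : ℝ) - 1 := by rw [Mdig_o]; norm_num; ring
      have hM10 : Mdig ⟨k, -1, Par.o⟩ 1 0 = (k : ℝ) + 1 := by rw [Mdig_o]; norm_num
      have hM11 : Mdig ⟨k, -1, Par.o⟩ 1 1 = (k : ℝ) := by rw [Mdig_o]; norm_num
      have hdt : 2 ≤ ((k : ℝ) + 1) * t + (k : ℝ) := by nlinarith
      refine ⟨?_, ?_, ?_, ?_⟩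
      · rw [hM10, hM11]; exact hdt
      · unfold mob
        rw [hM00, hM01, hM10, hM11, h_o, if_neg (by norm_num)]
        all_goals norm_num
      · rw [h_o, if_neg (by norm_num)]
        constructor
        · apply div_nonneg (by nlinarith) (by nlinarith)
        · rw [div_le_one (by nlinarith)]; nlinarith
      · intro s hs
        have hds : 2 ≤ ((k : ℝ) + 1) * s + (k : ℝ) := by nlinarith [hs.1]
        rw [h_o, h_o, if_neg (by norm_num)]
        refine lip_aux 1 hdt hds (by norm_num) ?_
        have h1 : ((k : ℝ) + 1) * t + (k : ℝ) ≠ 0 := by linarith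
        have h2 : ((k : ℝ) + 1) * s + (k : ℝ) ≠ 0 := by linarith
        push_cast
        field_simp
        ring

lemma word_facts : ∀ (l : List Digit), (∀ d ∈ l, d.Valid) → ∀ t ∈ Set.Icc (0:ℝ) 1,
    0 < (l.map Mdig).prod 1 0 * t + (l.map Mdig).prod 1 1 ∧
    hWord l t ∈ Set.Icc (0:ℝ) 1 ∧
    mob ((l.map Mdig).prod) t = hWord l t ∧
    ∀ s ∈ Set.Icc (0:ℝ) 1, |hWord l t - hWord l s| ≤ (1/4 : ℝ) ^ l.length * |t - s| := by
  intro l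
  induction l with
  | nil =>
    intro _ t ht
    simp only [List.map_nil, List.prod_nil, List.length_nil, pow_zero, one_mul]
    refine ⟨by simp [Matrix.one_apply], ht, by simp [mob, hWord, Matrix.one_apply], fun s _ => le_rfl⟩
  | cons d l ih =>
    intro hval t ht
    have hd := digit_facts (hval d (by simp))
    have ihl := ih (fun d' hd' => hval d' (by simp [hd']))
    obtain ⟨hBpos, hmem, hmob, hlip⟩ := ihl t ht
    set B := (l.map Mdig).prod with hBdef
    have hprod : ((d :: l).map Mdig).prod = Mdig d * B := by
      rw [List.map_cons, List.prod_cons]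
    have hcons : ∀ r : ℝ, hWord (d :: l) r = h d (hWord l r) := fun r => rfl
    have hBt : B 0 0 * t + B 0 1 = mob B t * (B 1 0 * t + B 1 1) := by
      unfold mob
      field_simp
      rw [mul_div_assoc, div_self (ne_of_gt (by linarith)), mul_one]
    obtain ⟨hden_d, hmob_d, hmem_d, hlip_d⟩ := hd (mob B t) (hmob ▸ hmem)
    have hfac : ∀ i : Fin 2, (Mdig d * B) i 0 * t + (Mdig d * B) i 1 =
        (Mdig d i 0 * mob B t + Mdig d i 1) * (B 1 0 * t + B 1 1) := by
      intro i
      rw [mul_lin, hBt]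
      ring
    refine ⟨?_, ?_, ?_, ?_⟩
    · rw [hprod, hfac 1]
      exact mul_pos (by linarith) hBpos
    · rw [hcons t, ← hmob]
      exact hmem_d
    · rw [hprod, hcons t, ← hmob, ← hmob_d]
      have humob : mob B t = (B 0 0 * t + B 0 1) / (B 1 0 * t + B 1 1) := rfl
      unfold mob
      rw [hfac 0, hfac 1, mul_div_mul_right _ _ hBpos.ne', humob]
    · intro s hs
      obtain ⟨hBpos', hmem', hmob', -⟩ := ihl s hs
      rw [hcons t, hcons s]
      have step1 : |h d (hWord l t) - h d (hWord l s)| ≤ 1/4 * |hWord l t - hWord l s| := by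
        have := hlip_d (hWord l s) hmem'
        rw [hmob] at this
        exact this
      have step2 := hlip s hs
      calc |h d (hWord l t) - h d (hWord l s)| ≤ 1/4 * |hWord l t - hWord l s| := step1
        _ ≤ 1/4 * ((1/4 : ℝ) ^ l.length * |t - s|) := by
            apply mul_le_mul_of_nonneg_left step2 (by norm_num)
        _ = (1/4 : ℝ) ^ (d :: l).length * |t - s| := by
            rw [List.length_cons, pow_succ]
            ring


/-- for irrational `x ∈ (0,1)`,
`x = h_{(a₁,ε₁)_{s₁}} ∘ ⋯ ∘ h_{(a_n,ε_n)_{s_n}} (Tⁿ x)`, the convergents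
satisfy `|x − P_n/Q_n| ≤ 4^{−n}`, and hence `P_n/Q_n → x`. -/
theorem convergents_tend_to_x :
    ∀ x ∈ Set.Ioo (0 : ℝ) 1, Irrational x →
      (∀ n : ℕ, 1 ≤ n →
        x = hWord ((List.range n).map fun i => digit (T^[i] x)) (T^[n] x) ∧
        |x - Pc n x / Qc n x| ≤ (1/4 : ℝ) ^ n) ∧
      Filter.Tendsto (fun n : ℕ => Pc n x / Qc n x) Filter.atTop (nhds x) := by
  intro x hx hirr
  have horb := orbit hx hirr
  have main : ∀ n : ℕ, x = hWord ((List.range n).map fun i => digit (T^[i] x)) (T^[n] x) ∧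
      |x - Pc n x / Qc n x| ≤ (1/4 : ℝ) ^ n := by
    intro n
    set l := (List.range n).map fun i => digit (T^[i] x) with hldef
    have hval : ∀ d ∈ l, d.Valid := by
      intro d hd
      obtain ⟨i, hi, rfl⟩ := List.mem_map.mp hd
      exact (digit_spec (horb i).1 (horb i).2).1
    have hlen : l.length = n := by simp [hldef]
    have hMn : Mn n x = (l.map Mdig).prod := by
      rw [Mn, hldef, List.map_map]
      rfl
    have ht0 : T^[n] x ∈ Set.Icc (0:ℝ) 1 := ⟨(horb n).1.1.le, (horb n).1.2.le⟩
    have h0 : (0:ℝ) ∈ Set.Icc (0:ℝ) 1 := by norm_num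
    obtain ⟨hpos, hmem, hmob, hlip⟩ := word_facts l hval (T^[n] x) ht0
    obtain ⟨hpos0, hmem0, hmob0, -⟩ := word_facts l hval 0 h0
    have hexp := expansion hx hirr n
    refine ⟨hexp, ?_⟩
    have hPQ : Pc n x / Qc n x = hWord l 0 := by
      rw [Pc, Qc, hMn, ← hmob0]
      unfold mob
      rw [mul_zero, zero_add, mul_zero, zero_add]
    calc |x - Pc n x / Qc n x| = |hWord l (T^[n] x) - hWord l 0| := by rw [hPQ, ← hexp]
      _ ≤ (1/4 : ℝ) ^ l.length * |T^[n] x - 0| := hlip 0 h0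
      _ ≤ (1/4 : ℝ) ^ n * 1 := by
          rw [hlen, sub_zero, abs_of_nonneg ht0.1]
          exact mul_le_mul_of_nonneg_left ht0.2 (pow_nonneg (by norm_num) n)
      _ = (1/4 : ℝ) ^ n := mul_one _
  refine ⟨fun n _ => main n, ?_⟩
  have hdist : ∀ n : ℕ, ‖Pc n x / Qc n x - x‖ ≤ (1/4 : ℝ) ^ n := by
    intro n
    rw [Real.norm_eq_abs, abs_sub_comm]
    exact (main n).2
  have hpow : Filter.Tendsto (fun n : ℕ => (1/4 : ℝ) ^ n) Filter.atTop (nhds 0) :=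
    tendsto_pow_atTop_nhds_zero_of_lt_one (by norm_num) (by norm_num)
  have hsq := squeeze_zero_norm hdist hpow
  have h2 := hsq.add (tendsto_const_nhds (x := x) (f := Filter.atTop))
  simpa using h2

end SCF
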